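/- Assume ω* < ω_max, and define the policy function g(ω) := ω* for ω ∈ [ω_min, ω^c] and g(ω) := g̃(ω) = (υ̂ − log(1 − exp(ω)))/β for ω ∈ (ω^c, ω_max], where ω^c := log(1 − exp(υ̂ − β·ω*)). Then for every ω₀ ∈ [ω_min, ω_max), the sequence defined by ω_{t+1} = g(ω_t) reaches ω* in finite time: there exists a finite T ≥ 1 with ω_t = ω* for all t ≥ T. Moreover, if ω₀ > ω* then, taking T minimal, ω₀ > ω₁ > … > ω_T = ω* (the sequence is strictly decreasing until it reaches ω*), and if ω₀ ≤ ω* then ω_t = ω* for all t ≥ 1. -/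

import Mathlib

open Real

set_option maxHeartbeats 1000000 in
/-- Deterministic policy dynamics.  With `ω* = log (β/(β+δ)) < ω_max = log (1 - c_min)`
and policy `g ω = ω*` for `ω ≤ ω^c` and `g ω = (υ̂ - log (1 - exp ω))/β` otherwise,
any sequence `ω_{t+1} = g ω_t` starting from `ω₀ ∈ [ω_min, ω_max)` reaches `ω*` in
finite time; it is strictly decreasing until it reaches `ω*` when `ω₀ > ω*`, and it
equals `ω*` from period 1 onward when `ω₀ ≤ ω*`. -/
theorem stmt_7 (β δ s cmin : ℝ)
    (hβ : β ∈ Set.Ioc (0 : ℝ) 1) (hδ : δ ∈ Set.Ioo (0 : ℝ) 1)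
    (hs1 : 1 / (1 + β) < s) (hs2 : s < 1)
    (hcmin : cmin ∈ Set.Ioo (0 : ℝ) s)
    (hcmineq : log cmin + β * log (1 - cmin) = log s + β * log (1 - s))
    (hωlt : log (β / (β + δ)) < log (1 - cmin))
    (g : ℝ → ℝ)
    (hg : ∀ ω, g ω =
      if ω ≤ log (1 - exp ((log s + β * log (1 - s)) - β * log (β / (β + δ))))
      then log (β / (β + δ))
      else ((log s + β * log (1 - s)) - log (1 - exp ω)) / β)
    (ω0 : ℝ) (hω0 : ω0 ∈ Set.Ico (log (1 - s)) (log (1 - cmin)))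
    (seq : ℕ → ℝ) (hseq0 : seq 0 = ω0) (hseqrec : ∀ t, seq (t + 1) = g (seq t)) :
    (∃ T : ℕ, 1 ≤ T ∧ ∀ t ≥ T, seq t = log (β / (β + δ))) ∧
    (log (β / (β + δ)) < ω0 →
      ∀ T : ℕ, seq T = log (β / (β + δ)) →
        (∀ t < T, seq t ≠ log (β / (β + δ))) →
        ∀ t < T, seq (t + 1) < seq t) ∧
    (ω0 ≤ log (β / (β + δ)) → ∀ t : ℕ, 1 ≤ t → seq t = log (β / (β + δ))) := by
  obtain ⟨hβ0, hβ1⟩ := hβ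
  obtain ⟨hδ0, hδ1⟩ := hδ
  obtain ⟨hcm0, hcms⟩ := hcmin
  set V : ℝ := log s + β * log (1 - s) with hVdef
  set L : ℝ := log (β / (β + δ)) with hLdef
  set M : ℝ := log (1 - cmin) with hMdef
  set C : ℝ := log (1 - exp (V - β * L)) with hCdef
  have hbd : 0 < β + δ := by linarith
  have hr0 : 0 < β / (β + δ) := div_pos hβ0 hbd
  have hr1 : β / (β + δ) < 1 := (div_lt_one hbd).2 (by linarith)
  have hM_pos : 0 < 1 - cmin := by linarith
  have hexpM : exp M = 1 - cmin := Real.exp_log hM_pos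
  have hexpL : exp L = β / (β + δ) := Real.exp_log hr0
  have hc : 0 < β / δ - β := by
    have : β < β / δ := by
      rw [lt_div_iff₀ hδ0]; nlinarith
    linarith
  -- key monotonicity estimate
  have key : ∀ a b : ℝ, L ≤ a → a < b → b ≤ M →
      log (1 - exp b) + β * b + (β / δ - β) * (b - a) ≤ log (1 - exp a) + β * a := by
    intro a b ha hab hbM
    have heb : exp b ≤ 1 - cmin := by rw [← hexpM]; exact Real.exp_le_exp.2 hbM
    have hea : exp a < 1 - cmin := lt_of_lt_of_le (Real.exp_lt_exp.2 hab) heb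
    have h1a : 0 < 1 - exp a := by linarith
    have h1b : 0 < 1 - exp b := by linarith
    have hlog : log (1 - exp b) - log (1 - exp a) ≤ (1 - exp b) / (1 - exp a) - 1 := by
      rw [← Real.log_div h1b.ne' h1a.ne']
      exact Real.log_le_sub_one_of_pos (div_pos h1b h1a)
    have hE : exp a * exp (b - a) = exp b := by
      rw [← Real.exp_add]; ring_nf
    have hexp : exp a * (b - a) ≤ exp b - exp a := by
      have h := Real.add_one_le_exp (b - a)
      nlinarith [Real.exp_pos a]
    have hxa : β ≤ (β + δ) * exp a := by
      have h1 : exp L ≤ exp a := Real.exp_le_exp.2 ha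
      rw [hexpL, div_le_iff₀ hbd] at h1
      linarith
    have hfrac : β / δ * (1 - exp a) ≤ exp a := by
      rw [div_mul_eq_mul_div, div_le_iff₀ hδ0]
      nlinarith
    have hdivle : β / δ * (b - a) ≤ (exp b - exp a) / (1 - exp a) := by
      rw [le_div_iff₀ h1a]
      have h5 := mul_le_mul_of_nonneg_right hfrac (by linarith : (0:ℝ) ≤ b - a)
      have h6 : β / δ * (b - a) * (1 - exp a) = β / δ * (1 - exp a) * (b - a) := by ring
      linarith [h5, h6, hexp]
    have hfr : (1 - exp b) / (1 - exp a) - 1 = -((exp b - exp a) / (1 - exp a)) := by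
      field_simp
      ring
    have hring : (β / δ - β) * (b - a) = β / δ * (b - a) - β * b + β * a := by ring
    linarith [hlog, hdivle, hfr, hring]
  have heM : log (1 - exp M) = log cmin := by rw [hexpM]; ring_nf
  have keyM : ∀ ω, L ≤ ω → ω < M →
      V + (β / δ - β) * (M - ω) ≤ log (1 - exp ω) + β * ω := by
    intro ω hLω hm
    have h := key ω M hLω hm le_rfl
    rw [heM] at h
    linarith [hcmineq]
  -- L < C
  have hVC : V - β * L < log (1 - exp L) := by
    have h := keyM L le_rfl hωlt
    have h2 := mul_pos hc (by linarith : (0:ℝ) < M - L)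
    linarith [h, h2]
  have h1L : 0 < 1 - exp L := by rw [hexpL]; linarith
  have hexpVC : exp (V - β * L) < 1 - exp L := by
    calc exp (V - β * L) < exp (log (1 - exp L)) := Real.exp_lt_exp.2 hVC
    _ = 1 - exp L := Real.exp_log h1L
  have hC_pos : 0 < 1 - exp (V - β * L) := by linarith [Real.exp_pos L]
  have hexpC : exp C = 1 - exp (V - β * L) := Real.exp_log hC_pos
  have hLC : L < C := by
    have h : exp L < 1 - exp (V - β * L) := by linarith
    calc L = log (exp L) := (Real.log_exp L).symm
    _ < C := Real.log_lt_log (Real.exp_pos L) h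
  -- branch lemmas
  have gLow : ∀ ω, ω ≤ C → g ω = L := by
    intro ω h; rw [hg ω, if_pos h]
  have gHigh : ∀ ω, C < ω → g ω = (V - log (1 - exp ω)) / β := by
    intro ω h; rw [hg ω, if_neg (not_le.2 h)]
  have hglt : ∀ ω, C < ω → ω < M → g ω < ω := by
    intro ω h1 hm
    rw [gHigh ω h1, div_lt_iff₀ hβ0]
    have h := keyM ω (le_trans hLC.le h1.le) hm
    have h2 := mul_pos hc (by linarith : (0:ℝ) < M - ω)
    have h3 : ω * β = β * ω := by ring
    linarith [h, h2, h3]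
  have hgL : ∀ ω, C < ω → ω < M → L < g ω := by
    intro ω h1 hm
    have hω1 : 0 < 1 - exp ω := by
      have : exp ω < 1 - cmin := by rw [← hexpM]; exact Real.exp_lt_exp.2 hm
      linarith
    have h2 : exp C < exp ω := Real.exp_lt_exp.2 h1
    rw [hexpC] at h2
    have h3 : log (1 - exp ω) < V - β * L := by
      calc log (1 - exp ω) < log (exp (V - β * L)) :=
            Real.log_lt_log hω1 (by linarith)
      _ = V - β * L := Real.log_exp _
    rw [gHigh ω h1, lt_div_iff₀ hβ0]
    linarith
  -- persistence at L
  have hpersist : ∀ t, seq t = L → ∀ u, t ≤ u → seq u = L := by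
    intro t ht u hu
    obtain ⟨n, rfl⟩ := Nat.exists_eq_add_of_le hu
    clear hu
    induction n with
    | zero => exact ht
    | succ n ih =>
      rw [show t + (n + 1) = (t + n) + 1 from rfl, hseqrec, ih, gLow _ hLC.le]
  have hω0M : ω0 < M := hω0.2
  -- invariant for part 2
  have hQ : ∀ t, seq t = L ∨ (L < seq t ∧ seq t < M) → seq (t + 1) = L ∨ (L < seq (t + 1) ∧ seq (t + 1) < M) := by
    intro t ih
    rcases ih with h | ⟨h1, h2⟩
    · left; rw [hseqrec, h, gLow _ hLC.le]
    · by_cases hcC : seq t ≤ C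
      · left; rw [hseqrec, gLow _ hcC]
      · push_neg at hcC
        right
        rw [hseqrec]
        exact ⟨hgL _ hcC h2, lt_trans (hglt _ hcC h2) h2⟩
  refine ⟨?_, ?_, ?_⟩
  · -- finite time reaching
    have hkey : ∃ k, seq k ≤ C := by
      by_cases h0 : ω0 ≤ C
      · exact ⟨0, hseq0 ▸ h0⟩
      push_neg at h0
      set ε : ℝ := (β / δ - β) * (M - ω0) / β with hεdef
      have hε : 0 < ε := div_pos (mul_pos hc (by linarith)) hβ0
      have hεβ : ε * β = (β / δ - β) * (M - ω0) := div_mul_cancel₀ _ hβ0.ne'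
      have hdec' : ∀ ω, C < ω → ω ≤ ω0 → g ω ≤ ω - ε := by
        intro ω h1 h2
        have hm : ω < M := lt_of_le_of_lt h2 hω0M
        have hk := keyM ω (le_trans hLC.le h1.le) hm
        have h3 : (β / δ - β) * (M - ω0) ≤ (β / δ - β) * (M - ω) :=
          mul_le_mul_of_nonneg_left (by linarith) hc.le
        rw [gHigh ω h1, div_le_iff₀ hβ0]
        have h4 : (ω - ε) * β = ω * β - ε * β := by ring
        rw [h4, hεβ]
        linarith
      have hinv : ∀ t : ℕ, (∃ k ≤ t, seq k ≤ C) ∨ (C < seq t ∧ seq t ≤ ω0 - t * ε) := by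
        intro t
        induction t with
        | zero => right; rw [hseq0]; constructor; exact h0; simp
        | succ t ih =>
          rcases ih with ⟨k, hk, hkC⟩ | ⟨h1, h2⟩
          · exact Or.inl ⟨k, le_trans hk (Nat.le_succ t), hkC⟩
          · have htε : (0:ℝ) ≤ (t : ℝ) * ε := mul_nonneg (Nat.cast_nonneg t) hε.le
            have hle : seq t ≤ ω0 := by linarith
            have hstep : seq (t + 1) ≤ seq t - ε := by
              rw [hseqrec]; exact hdec' _ h1 hle
            by_cases hC2 : seq (t + 1) ≤ C
            · exact Or.inl ⟨t + 1, le_rfl, hC2⟩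
            · push_neg at hC2
              right
              refine ⟨hC2, ?_⟩
              push_cast
              linarith
      obtain ⟨N, hN⟩ := exists_nat_ge ((ω0 - C) / ε)
      rcases hinv N with ⟨k, _, hkC⟩ | ⟨h1, h2⟩
      · exact ⟨k, hkC⟩
      · exfalso
        rw [div_le_iff₀ hε] at hN
        linarith
    obtain ⟨k, hkC⟩ := hkey
    refine ⟨k + 1, Nat.succ_le_succ (Nat.zero_le k), ?_⟩
    intro t ht
    exact hpersist (k + 1) (by rw [hseqrec, gLow _ hkC]) t ht
  · -- strict decrease
    intro hLω0 T hT hTne t htT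
    have hQt : ∀ u : ℕ, seq u = L ∨ (L < seq u ∧ seq u < M) := by
      intro u
      induction u with
      | zero => right; rw [hseq0]; exact ⟨hLω0, hω0M⟩
      | succ u ih => exact hQ u ih
    have hne : seq t ≠ L := hTne t htT
    rcases hQt t with h | ⟨h1, h2⟩
    · exact absurd h hne
    by_cases hcC : seq t ≤ C
    · rw [hseqrec, gLow _ hcC]; exact h1
    · push_neg at hcC
      rw [hseqrec]
      exact hglt _ hcC h2
  · -- ω0 ≤ L case
    intro hω0L t ht
    have h1 : seq 1 = L := by
      rw [show (1:ℕ) = 0 + 1 from rfl, hseqrec, hseq0, gLow _ (le_trans hω0L hLC.le)]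
    exact hpersist 1 h1 t ht
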